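/- Let κ be a regular cardinal, ⟨μ_i : i < κ⟩ a sequence of regular cardinals, D an ultrafilter on κ, and suppose (f̄, ḡ) is a cut of ∏_{i<κ} μ_i / D of cofinality (λ₁, λ₂), where λ₁, λ₂ are infinite regular cardinals. Then λ₁ ≤ 2^κ. -/

import Mathlib

open Cardinal

/-- `f <_D g` iff the set of coordinates where `f` is below `g` lies in `D`. -/
def ltD {ι : Type*} (D : Ultrafilter ι) (f g : ι → Ordinal) : Prop :=
  {i | f i < g i} ∈ D

/-- `(f, g)` is a cut of `∏ μ i / D` of cofinality `(λ₁, λ₂)`: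
`f` is `<_D`-increasing of length `λ₁`, `g` is `<_D`-decreasing of length `λ₂`,
every `f α` is `<_D`-below every `g ξ`, all functions lie in `∏ μ i`, and
no `h ∈ ∏ μ i` lies strictly `<_D`-between all the `f α` and all the `g ξ`. -/
def IsCut {ι : Type*} (D : Ultrafilter ι) (μ : ι → Cardinal) (l₁ l₂ : Cardinal)
    (f : l₁.ord.ToType → ι → Ordinal) (g : l₂.ord.ToType → ι → Ordinal) : Prop :=
  (∀ α i, f α i < (μ i).ord) ∧ (∀ ξ i, g ξ i < (μ i).ord) ∧
  (∀ α β, α < β → ltD D (f α) (f β)) ∧ (∀ ξ ζ, ξ < ζ → ltD D (g ζ) (g ξ)) ∧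
  (∀ α ξ, ltD D (f α) (g ξ)) ∧
  ¬ ∃ h : ι → Ordinal, (∀ i, h i < (μ i).ord) ∧
      (∀ α, ltD D (f α) h) ∧ (∀ ξ, ltD D h (g ξ))

namespace CutAux

universe u w

variable {ι : Type u} {A : Type u} {W : Type u} [LinearOrder A] [LinearOrder W]
  [WellFoundedLT W]

/-- the projection of `f β` to the coordinatewise sets `S`. -/
noncomputable def tSf (f : A → ι → Ordinal.{w}) (S : ι → Set Ordinal.{w}) (β : A) (i : ι) :
    Ordinal.{w} :=
  sInf {x | x ∈ S i ∧ f β i ≤ x}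

/-- there is an upper bound of the `f`s strictly below the eventual projection to `S`. -/
def QS (D : Ultrafilter ι) (f : A → ι → Ordinal.{w}) (S : ι → Set Ordinal.{w}) : Prop :=
  ∃ v : ι → Ordinal.{w}, (∀ a, ltD D (f a) v) ∧ ∃ a₀ : A, ∀ β, a₀ ≤ β → ltD D v (tSf f S β)

open Classical in
noncomputable def pickU (D : Ultrafilter ι) (f : A → ι → Ordinal.{w})
    (S : ι → Set Ordinal.{w}) : ι → Ordinal.{w} :=
  if h : QS D f S then h.choose else fun _ => 0

noncomputable def NN (D : Ultrafilter ι) (f : A → ι → Ordinal.{w}) (top : ι → Ordinal.{w}) :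
    W → ι → Ordinal.{w} :=
  WellFounded.fix wellFounded_lt
    (fun x ih => pickU D f (fun i => insert (top i) {v | ∃ y, ∃ h : y < x, ih y h i = v}))

noncomputable def SSet (D : Ultrafilter ι) (f : A → ι → Ordinal.{w}) (top : ι → Ordinal.{w})
    (x : W) (i : ι) : Set Ordinal.{w} :=
  insert (top i) {v | ∃ y, ∃ _h : y < x, NN D f top y i = v}

theorem ord_ne_zero_of_aleph0_le {c : Cardinal.{v}} (hc : ℵ₀ ≤ c) : c.ord ≠ 0 := by
  intro h0
  have h1 : Order.IsSuccLimit c.ord := Cardinal.isSuccLimit_ord hc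
  rw [h0] at h1
  exact Ordinal.not_isSuccLimit_zero h1

theorem NN_eq (D : Ultrafilter ι) (f : A → ι → Ordinal.{w}) (top : ι → Ordinal.{w})
    (x : W) : NN D f top x = pickU D f (SSet D f top x) :=
  WellFounded.fix_eq _ _ _

end CutAux

/-- The core argument: an unrealized cut whose left index order `A` has the property
that every subset of size `≤ 2 ^ #ι` is bounded leads to a contradiction. -/
theorem CutAux.main {ι A : Type u} {B : Type v} [LinearOrder A] [LinearOrder B]
    [Nonempty A] [Nonempty B] [NoMaxOrder B] [Infinite ι]
    (D : Ultrafilter ι) (μ : ι → Cardinal.{w})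
    (f : A → ι → Ordinal.{w}) (g : B → ι → Ordinal.{w})
    (hfμ : ∀ a i, f a i < (μ i).ord)
    (hgμ : ∀ b i, g b i < (μ i).ord)
    (hfmono : ∀ a a', a < a' → ltD D (f a) (f a'))
    (hgmono : ∀ b b', b < b' → ltD D (g b') (g b))
    (hfg : ∀ a b, ltD D (f a) (g b))
    (hno : ¬ ∃ h : ι → Ordinal.{w}, (∀ i, h i < (μ i).ord) ∧
      (∀ a, ltD D (f a) h) ∧ (∀ b, ltD D h (g b)))
    (hbound : ∀ s : Set A, #s ≤ 2 ^ #ι → Set.Bounded (· < ·) s) :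
    False := by
  have hκω : ℵ₀ ≤ #ι := Cardinal.infinite_iff.1 ‹Infinite ι›
  have h2κω : ℵ₀ ≤ (2 : Cardinal) ^ #ι := le_trans hκω (Cardinal.cantor _).le
  -- filter helpers
  have supD : ∀ {s t : Set ι}, s ∈ D → s ⊆ t → t ∈ D := by
    intro s t hs hst
    exact Ultrafilter.mem_coe.1 (Filter.mem_of_superset (Ultrafilter.mem_coe.2 hs) hst)
  have interD : ∀ {s t : Set ι}, s ∈ D → t ∈ D → s ∩ t ∈ D := by
    intro s t hs ht
    exact Ultrafilter.mem_coe.1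
      (Filter.inter_mem (Ultrafilter.mem_coe.2 hs) (Ultrafilter.mem_coe.2 ht))
  -- A has no maximal elements, from `hbound`
  have hgtA : ∀ a : A, ∃ b, a < b := by
    intro a
    obtain ⟨b, hb⟩ := hbound {a} (by
      rw [Cardinal.mk_singleton a]
      exact le_trans Cardinal.one_le_aleph0 h2κω)
    exact ⟨b, hb a rfl⟩
  -- Step 1 : descent: every upper bound has a strictly smaller upper bound
  have hdesc : ∀ u : ι → Ordinal, (∀ a, ltD D (f a) u) →
      ∃ v : ι → Ordinal, (∀ a, ltD D (f a) v) ∧ ltD D v u := by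
    intro u hu
    by_contra hnu
    push_neg at hnu
    have hwg : ∀ ξ : B, ltD D u (g ξ) := by
      intro ξ
      obtain ⟨ξ', hξ'⟩ := exists_gt ξ
      by_contra hcon2
      have h1 : {i | g ξ i ≤ u i} ∈ D := by
        have h2 : {i | u i < g ξ i}ᶜ ∈ D := Ultrafilter.compl_mem_iff_notMem.2 hcon2
        have h3 : {i | u i < g ξ i}ᶜ = {i | g ξ i ≤ u i} := by
          ext i; simp [not_lt]
        rwa [h3] at h2
      have h3 : ltD D (g ξ') u := by
        refine supD (interD (hgmono ξ ξ' hξ') h1) ?_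
        rintro i ⟨hi1, hi2⟩
        simp only [Set.mem_setOf_eq] at hi1 hi2 ⊢
        exact lt_of_lt_of_le hi1 hi2
      exact hnu (g ξ') (fun a => hfg a ξ') h3
    have ξ₀ : B := Classical.arbitrary B
    have hT : {i | u i < (μ i).ord} ∈ D :=
      supD (hwg ξ₀) (fun i hi => lt_trans hi (hgμ ξ₀ i))
    refine hno ⟨fun i => if u i < (μ i).ord then u i else 0, fun i => ?_, fun a => ?_,
      fun ξ => ?_⟩
    · dsimp only
      split
      · assumption
      · exact lt_of_le_of_lt zero_le (hfμ (Classical.arbitrary A) i)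
    · refine supD (interD (hu a) hT) ?_
      rintro i ⟨hi1, hi2⟩
      simp only [Set.mem_setOf_eq] at hi1 hi2 ⊢
      rw [if_pos hi2]
      exact hi1
    · refine supD (interD (hwg ξ) hT) ?_
      rintro i ⟨hi1, hi2⟩
      simp only [Set.mem_setOf_eq] at hi1 hi2 ⊢
      rw [if_pos hi2]
      exact hi1
  -- the top function
  set top : ι → Ordinal := fun i => (μ i).ord with htopdef
  -- Step 2 : facts about projections
  have htSmem : ∀ (S : ι → Set Ordinal), (∀ i, top i ∈ S i) →
      ∀ (β : A) (i), tSf f S β i ∈ S i ∧ f β i ≤ tSf f S β i := by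
    intro S hS β i
    have hne : {x | x ∈ S i ∧ f β i ≤ x}.Nonempty := ⟨top i, hS i, (hfμ β i).le⟩
    exact csInf_mem hne
  have htSle : ∀ (S : ι → Set Ordinal), (∀ i, top i ∈ S i) → ∀ (a b : A) (i),
      f a i ≤ f b i → tSf f S a i ≤ tSf f S b i := by
    intro S hS a b i hab
    exact csInf_le (OrderBot.bddBelow _) ⟨(htSmem S hS b i).1, le_trans hab (htSmem S hS b i).2⟩
  have htSanti : ∀ (S S' : ι → Set Ordinal), (∀ i, S i ⊆ S' i) →
      (∀ i, top i ∈ S i) → ∀ (b : A) (i),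
      tSf f S' b i ≤ tSf f S b i := by
    intro S S' hSS hS b i
    exact csInf_le (OrderBot.bddBelow _) ⟨hSS i (htSmem S hS b i).1, (htSmem S hS b i).2⟩
  -- Step 3 : pigeonhole via hbound
  have hcof : ∀ (Y : Type u) (F : A → Y), #Y ≤ 2 ^ #ι →
      ∃ y, ∀ γ, ∃ β, γ ≤ β ∧ F β = y := by
    intro Y F hY
    by_contra hcon2
    push_neg at hcon2
    choose b hb using hcon2
    have hrange : #(Set.range b) ≤ 2 ^ #ι := le_trans Cardinal.mk_range_le hY
    obtain ⟨z, hz⟩ := hbound _ hrange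
    exact hb (F z) z (hz (b (F z)) (Set.mem_range_self _)).le rfl
  -- Step 4 : stabilization, given a coding of the possible projections
  have hstab : ∀ (S : ι → Set Ordinal) (Y : Type u) (dec : ι → Y → Ordinal),
      (∀ i, top i ∈ S i) → #Y ≤ 2 ^ #ι →
      (∀ i x, x ∈ S i → ∃ c : Y, dec i c = x) →
      ∃ a₀ : A, ∀ β, a₀ ≤ β →
        ({i | tSf f S β i ≤ tSf f S a₀ i} ∈ D ∧
         {i | tSf f S a₀ i ≤ tSf f S β i} ∈ D) := by
    intro S Y dec hS hY hdec
    have hle_fun : ∀ a b : A, a ≤ b → {i | tSf f S a i ≤ tSf f S b i} ∈ D := by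
      intro a b hab
      rcases eq_or_lt_of_le hab with h | h
      · subst h
        have h4 : {i | tSf f S a i ≤ tSf f S a i} = Set.univ := by
          ext i; simp
        rw [h4]
        exact Ultrafilter.mem_coe.1 Filter.univ_mem
      · refine supD (hfmono a b h) ?_
        intro i hi
        simp only [Set.mem_setOf_eq] at hi ⊢
        exact htSle S hS a b i (le_of_lt hi)
    have hcode : ∀ (β : A) (i : ι), ∃ c : Y, dec i c = tSf f S β i :=
      fun β i => hdec i _ (htSmem S hS β i).1
    choose code hcodeEq using hcode
    have hYfun : #(ι → Y) ≤ 2 ^ #ι := by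
      have h1 : #(ι → Y) = #Y ^ #ι := (Cardinal.power_def Y ι).symm
      rw [h1]
      calc #Y ^ #ι ≤ ((2 : Cardinal) ^ #ι) ^ #ι := Cardinal.power_le_power_right hY
        _ = (2 : Cardinal) ^ (#ι * #ι) := by rw [← Cardinal.power_mul]
        _ = (2 : Cardinal) ^ #ι := by rw [Cardinal.mul_eq_self hκω]
    obtain ⟨y, hy⟩ := hcof (ι → Y) (fun β => code β) hYfun
    obtain ⟨a₀, -, ha₀⟩ := hy (Classical.arbitrary A)
    refine ⟨a₀, fun β hβ => ?_⟩
    obtain ⟨a₁, hβ₁, ha₁⟩ := hy β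
    have heq : ∀ i, tSf f S a₁ i = tSf f S a₀ i := by
      intro i
      rw [← hcodeEq a₁ i, ← hcodeEq a₀ i, ha₁, ha₀]
    constructor
    · have h1 := hle_fun β a₁ hβ₁
      have h2 : {i | tSf f S β i ≤ tSf f S a₁ i} = {i | tSf f S β i ≤ tSf f S a₀ i} := by
        ext i; rw [Set.mem_setOf_eq, Set.mem_setOf_eq, heq i]
      rwa [h2] at h1
    · exact hle_fun a₀ β hβ
  -- Step 5 : the stage index type, of size `(#ι)⁺`
  let W := (Order.succ #ι : Cardinal).ord.ToType
  have hsκω : ℵ₀ ≤ (Order.succ #ι : Cardinal) := le_trans hκω (Order.le_succ _)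
  haveI : Nonempty W := Ordinal.toType_nonempty_iff_ne_zero.2 (by
    intro h0
    have h1 : Order.IsSuccLimit (Order.succ #ι : Cardinal).ord := Cardinal.isSuccLimit_ord hsκω
    rw [h0] at h1
    exact Ordinal.not_isSuccLimit_zero h1)
  haveI : NoMaxOrder W :=
    Ordinal.toType_noMax_of_succ_lt fun a ha => (Cardinal.isSuccLimit_ord hsκω).succ_lt ha
  have hWmk : #W = (Order.succ #ι : Cardinal) := by
    rw [Cardinal.mk_toType, Cardinal.card_ord]
  -- Step 6 : codes for the stage sets
  have hcodeCard : ∀ x : W, #(Option {y : W // y < x}) ≤ 2 ^ #ι := by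
    intro x
    rw [Cardinal.mk_option]
    calc #{y : W // y < x} + 1 ≤ #W + 1 :=
          add_le_add (Cardinal.mk_subtype_le (fun y : W => y < x)) le_rfl
      _ ≤ 2 ^ #ι + 2 ^ #ι := by
          refine add_le_add ?_ ?_
          · rw [hWmk]; exact Order.succ_le_of_lt (Cardinal.cantor _)
          · exact le_trans Cardinal.one_le_aleph0 h2κω
      _ = 2 ^ #ι := Cardinal.add_eq_self h2κω
  have hStop : ∀ (x : W) (i), top i ∈ SSet (W := W) D f top x i :=
    fun x i => Set.mem_insert _ _
  -- Step 7 : the recursion hypothesis holds at every stage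
  have hQ : ∀ x : W, QS D f (SSet (W := W) D f top x) := by
    intro x
    obtain ⟨a₀, ha₀⟩ := hstab (SSet (W := W) D f top x) (Option {y : W // y < x})
      (fun i c => Option.rec (top i) (fun y => NN (W := W) D f top y.1 i) c)
      (hStop x) (hcodeCard x)
      (by
        intro i z hz
        rcases hz with h1 | ⟨y, hy, h2⟩
        · exact ⟨none, h1.symm⟩
        · exact ⟨some ⟨y, hy⟩, h2⟩)
    have hub : ∀ a, ltD D (f a) (tSf f (SSet (W := W) D f top x) a₀) := by
      intro a
      obtain ⟨b, hb⟩ := hgtA (max a a₀)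
      have h1 : ltD D (f a) (f b) := hfmono a b (lt_of_le_of_lt (le_max_left _ _) hb)
      have h2 := (ha₀ b (le_of_lt (lt_of_le_of_lt (le_max_right _ _) hb))).1
      refine supD (interD h1 h2) ?_
      rintro i ⟨hi1, hi2⟩
      simp only [Set.mem_setOf_eq] at hi1 hi2 ⊢
      exact lt_of_lt_of_le hi1 (le_trans (htSmem _ (hStop x) b i).2 hi2)
    obtain ⟨v, hv, hvlt⟩ := hdesc _ hub
    refine ⟨v, hv, a₀, fun β hβ => ?_⟩
    have h2 := (ha₀ β hβ).2
    refine supD (interD hvlt h2) ?_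
    rintro i ⟨hi1, hi2⟩
    simp only [Set.mem_setOf_eq] at hi1 hi2 ⊢
    exact lt_of_lt_of_le hi1 hi2
  -- Step 8 : properties of the recursion
  have hNprop : ∀ x : W,
      (∀ a, ltD D (f a) (NN (W := W) D f top x)) ∧
      ∃ a₀ : A, ∀ β, a₀ ≤ β → ltD D (NN (W := W) D f top x)
        (tSf f (SSet (W := W) D f top x) β) := by
    intro x
    have hq := hQ x
    rw [NN_eq, pickU, dif_pos hq]
    exact hq.choose_spec
  choose th hth using fun x : W => (hNprop x).2
  -- Step 9 : a uniform index beyond all thresholds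
  have hthbd : Set.Bounded (· < ·) (Set.range th) := by
    refine hbound _ ?_
    refine le_trans Cardinal.mk_range_le ?_
    rw [hWmk]
    exact Order.succ_le_of_lt (Cardinal.cantor _)
  obtain ⟨bst, hbst⟩ := hthbd
  -- Step 10 : the decreasing functions
  set v : W → ι → Ordinal := fun x => tSf f (SSet (W := W) D f top x) bst with hvdef
  have hSmono : ∀ x x' : W, x ≤ x' → ∀ i,
      SSet (W := W) D f top x i ⊆ SSet (W := W) D f top x' i := by
    intro x x' h i z hz
    rcases hz with h1 | ⟨y, hy, h2⟩
    · exact Set.mem_insert_iff.2 (Or.inl h1)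
    · exact Set.mem_insert_iff.2 (Or.inr ⟨y, lt_of_lt_of_le hy h, h2⟩)
  have hvanti : ∀ x x' : W, x ≤ x' → ∀ i, v x' i ≤ v x i := by
    intro x x' h i
    exact htSanti _ _ (hSmono x x' h) (hStop x) bst i
  -- the minimal strict successor in `W`
  have hsuxex : ∀ x : W, ∃ y, x < y := fun x => exists_gt x
  have wfW : WellFounded ((· < ·) : W → W → Prop) := wellFounded_lt
  set sux : W → W := fun x => wfW.min {y | x < y} (hsuxex x) with hsuxdef
  have hsux_lt : ∀ x : W, x < sux x := fun x => wfW.min_mem {y | x < y} (hsuxex x)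
  have hsux_min : ∀ x y : W, x < y → sux x ≤ y := by
    intro x y h
    exact not_lt.1 (wfW.not_lt_min {y | x < y} h)
  have hdrop : ∀ x : W, {i | v (sux x) i < v x i} ∈ D := by
    intro x
    have hub := (hNprop x).1 bst
    have hlt := hth x bst (hbst (th x) (Set.mem_range_self x)).le
    refine supD (interD hub hlt) ?_
    rintro i ⟨hi1, hi2⟩
    simp only [Set.mem_setOf_eq] at hi1 hi2 ⊢
    have hmem : NN (W := W) D f top x i ∈ SSet (W := W) D f top (sux x) i :=
      Set.mem_insert_iff.2 (Or.inr ⟨x, hsux_lt x, rfl⟩)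
    have h5 : v (sux x) i ≤ NN (W := W) D f top x i :=
      csInf_le (OrderBot.bddBelow _) ⟨hmem, le_of_lt hi1⟩
    exact lt_of_le_of_lt h5 hi2
  -- Step 11 : pick a drop coordinate for each stage, find an infinite fiber
  have hdropne := fun x : W => Ultrafilter.nonempty_of_mem (hdrop x)
  choose iD hiD using hdropne
  have hWbig : #ι < #W := by
    rw [hWmk]
    exact Order.lt_succ _
  obtain ⟨istar, hinf⟩ := Cardinal.exists_infinite_fiber' iD hWbig
  have hfib : (iD ⁻¹' {istar}).Infinite := Set.infinite_coe_iff.1 hinf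
  -- Step 12 : extract an increasing ω-chain inside the fiber
  have hPWO : (Set.univ : Set W).IsPWO :=
    (Set.isWF_univ_iff.2 ⟨wfW⟩).isPWO
  let e := hfib.natEmbedding
  obtain ⟨gs, hgs⟩ := hPWO.exists_monotone_subseq (f := fun n => (e n : W))
    (fun n => Set.mem_univ _)
  set a : ℕ → W := fun n => (e (gs n) : W) with hadef
  have hamono : ∀ n : ℕ, a n < a (n + 1) := by
    intro n
    have hle : a n ≤ a (n + 1) := hgs (Nat.le_succ n)
    rcases lt_or_eq_of_le hle with h | h
    · exact h
    · exfalso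
      have h1 : e (gs n) = e (gs (n + 1)) := Subtype.ext h
      have h2 : gs n = gs (n + 1) := e.injective h1
      exact absurd h2 (ne_of_lt (gs.lt_iff_lt.2 (Nat.lt_succ_self n)))
  have hamem : ∀ n : ℕ, iD (a n) = istar := fun n => (e (gs n)).2
  -- Step 13 : the final decreasing sequence of ordinals
  have hdec : ∀ n : ℕ, v (a (n + 1)) istar < v (a n) istar := by
    intro n
    have h1 : sux (a n) ≤ a (n + 1) := hsux_min _ _ (hamono n)
    have h2 := hvanti _ _ h1 istar
    have h3 : v (sux (a n)) istar < v (a n) istar := by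
      have h4 := hiD (a n)
      rw [hamem n] at h4
      exact h4
    exact lt_of_le_of_lt h2 h3
  exact (RelEmbedding.natGT (fun n => v (a n) istar)
    hdec).not_wellFounded Ordinal.lt_wf

theorem cut_first_cofinality_le (κ : Cardinal) (hκ : κ.IsRegular)
    (μ : κ.ord.ToType → Cardinal) (hμ : ∀ i, (μ i).IsRegular)
    (D : Ultrafilter κ.ord.ToType) (l₁ l₂ : Cardinal)
    (hl₁ : l₁.IsRegular) (hl₂ : l₂.IsRegular)
    (f : l₁.ord.ToType → κ.ord.ToType → Ordinal)
    (g : l₂.ord.ToType → κ.ord.ToType → Ordinal)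
    (hcut : IsCut D μ l₁ l₂ f g) :
    l₁ ≤ (2 : Cardinal) ^ κ := by
  by_contra hcon
  push_neg at hcon
  obtain ⟨hfμ, hgμ, hfmono, hgmono, hfg, hno⟩ := hcut
  have hκω : ℵ₀ ≤ κ := hκ.aleph0_le
  have hl₁ω : ℵ₀ ≤ l₁ := hl₁.aleph0_le
  have hl₂ω : ℵ₀ ≤ l₂ := hl₂.aleph0_le
  haveI : Nonempty l₁.ord.ToType :=
    Ordinal.toType_nonempty_iff_ne_zero.2 (CutAux.ord_ne_zero_of_aleph0_le hl₁ω)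
  haveI : Nonempty l₂.ord.ToType :=
    Ordinal.toType_nonempty_iff_ne_zero.2 (CutAux.ord_ne_zero_of_aleph0_le hl₂ω)
  haveI : NoMaxOrder l₂.ord.ToType :=
    Ordinal.toType_noMax_of_succ_lt fun a ha => (Cardinal.isSuccLimit_ord hl₂ω).succ_lt ha
  haveI : Infinite κ.ord.ToType := by
    rw [Cardinal.infinite_iff, Cardinal.mk_toType, Cardinal.card_ord]
    exact hκω
  have hmkι : #κ.ord.ToType = κ := by
    rw [Cardinal.mk_toType, Cardinal.card_ord]
  refine CutAux.main D μ f g hfμ hgμ hfmono hgmono hfg hno ?_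
  intro s hs
  haveI : IsWellOrder l₁.ord.ToType (· < ·) := isWellOrder_lt
  apply not_isCofinal_iff.1
  intro hc
  have hcf := Order.cof_le hc
  rw [Ordinal.cof_toType, hl₁.cof_ord] at hcf
  rw [hmkι] at hs
  exact absurd (lt_of_le_of_lt hs hcon) (not_lt.2 hcf)
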